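/- arXiv:2502.03096 — 2 statements merged into one kernel-verified Lean document; each statement's English description precedes it below -/
import Mathlib

section
/- Let f : {v ∈ ℝ³ : n·v > 0} → ℝ be square integrable against (n·v)dv, where n is a unit vector, and let μ be the standard Maxwellian with c_μ = √(2π). Define P_γ f(v) = c_μ √(μ(v)) ∫_{{n·u>0}} f(u) √(μ(u)) (n·u) du (for all v ∈ ℝ³), and extend f to incoming velocities by f(v) = P_γ f(v) for n·v < 0. Then ∫_{ℝ³} |f(v)|² (n·v) dv = ∫_{{n·v>0}} |(I − P_γ)f(v)|² (n·v) dv. -/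
open MeasureTheory Real

noncomputable def gaussMu (v : EuclideanSpace ℝ (Fin 3)) : ℝ :=
  (2 * π) ^ (-(3:ℝ)/2) * Real.exp (-‖v‖^2 / 2)

/-- The outgoing half-space `{u : n·u > 0}`. -/
def outSet (n : EuclideanSpace ℝ (Fin 3)) : Set (EuclideanSpace ℝ (Fin 3)) :=
  {u | 0 < (inner ℝ n u : ℝ)}

/-- The diffuse-reflection boundary operator
`P_γ f(v) = √(2π) √μ(v) ∫_{n·u>0} f(u)√μ(u)(n·u) du`. -/
noncomputable def Pgamma (n : EuclideanSpace ℝ (Fin 3))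
    (f : EuclideanSpace ℝ (Fin 3) → ℝ) (v : EuclideanSpace ℝ (Fin 3)) : ℝ :=
  Real.sqrt (2 * π) * Real.sqrt (gaussMu v) *
    ∫ u in outSet n, f u * Real.sqrt (gaussMu u) * (inner ℝ n u : ℝ)

open Set

lemma int_exp_half : ∫ x : ℝ, Real.exp (-x^2/2) = Real.sqrt (2*π) := by
  have h : ∀ x : ℝ, -x^2/2 = -(1/2) * x^2 := fun x => by ring
  simp_rw [h]
  rw [integral_gaussian]
  rw [show π / (1/2) = 2 * π by ring]

lemma integrable_exp_half : Integrable (fun x : ℝ => Real.exp (-x^2/2)) := by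
  have h : ∀ x : ℝ, -x^2/2 = -(1/2) * x^2 := fun x => by ring
  simp_rw [h]
  exact integrable_exp_neg_mul_sq (by norm_num)

lemma integrable_mul_exp_half : Integrable (fun x : ℝ => x * Real.exp (-x^2/2)) := by
  have h : ∀ x : ℝ, -x^2/2 = -(1/2) * x^2 := fun x => by ring
  simp_rw [h]
  exact integrable_mul_exp_neg_mul_sq (by norm_num)

lemma int_Ioi_mul_exp_half : ∫ x in Ioi (0:ℝ), x * Real.exp (-x^2/2) = 1 := by
  have hderiv : ∀ x ∈ Ici (0:ℝ), HasDerivAt (fun t : ℝ => -Real.exp (-t^2/2))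
      (x * Real.exp (-x^2/2)) x := by
    intro x _
    have h1 : HasDerivAt (fun t : ℝ => -t^2/2) (-x) x := by
      have h := ((hasDerivAt_pow 2 x).neg.div_const 2)
      refine h.congr_deriv ?_
      push_cast
      ring
    have h2 := (h1.exp).neg
    refine h2.congr_deriv ?_
    ring
  have htend : Filter.Tendsto (fun t : ℝ => -Real.exp (-t^2/2)) Filter.atTop (nhds 0) := by
    have h0 : Filter.Tendsto (fun t : ℝ => -t^2/2) Filter.atTop Filter.atBot := by
      apply Filter.Tendsto.atBot_div_const (by norm_num : (0:ℝ) < 2)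
      rw [Filter.tendsto_neg_atBot_iff]
      exact Filter.tendsto_pow_atTop (by norm_num)
    have := (Real.tendsto_exp_atBot.comp h0).neg
    simpa using this
  have := integral_Ioi_of_hasDerivAt_of_tendsto' hderiv
    (integrable_mul_exp_half.integrableOn) htend
  simpa using this


noncomputable def gvec : Fin 3 → ℝ → ℝ :=
  ![fun t => t * Real.exp (-t^2/2), fun t => Real.exp (-t^2/2), fun t => Real.exp (-t^2/2)]

noncomputable def gvec' : Fin 3 → ℝ → ℝ :=
  ![Set.indicator (Ioi (0:ℝ)) (fun s => s * Real.exp (-s^2/2)),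
    fun t => Real.exp (-t^2/2), fun t => Real.exp (-t^2/2)]

lemma gvec0 : gvec 0 = fun t => t * Real.exp (-t^2/2) := rfl
lemma gvec1 : gvec 1 = fun t => Real.exp (-t^2/2) := rfl
lemma gvec2 : gvec 2 = fun t => Real.exp (-t^2/2) := rfl
lemma gvec'0 : gvec' 0 = Set.indicator (Ioi (0:ℝ)) (fun s => s * Real.exp (-s^2/2)) := rfl
lemma gvec'1 : gvec' 1 = fun t => Real.exp (-t^2/2) := rfl
lemma gvec'2 : gvec' 2 = fun t => Real.exp (-t^2/2) := rfl

lemma pi_integrable :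
    Integrable (fun x : Fin 3 → ℝ => (∏ i, Real.exp (-(x i)^2/2)) * x 0) := by
  have h : (fun x : Fin 3 → ℝ => (∏ i, Real.exp (-(x i)^2/2)) * x 0)
      = fun x => ∏ i, gvec i (x i) := by
    funext x
    simp only [Fin.prod_univ_three, gvec0, gvec1, gvec2]
    ring
  rw [h]
  apply Integrable.fintype_prod (f := gvec)
  intro i
  fin_cases i
  · exact integrable_mul_exp_half
  · exact integrable_exp_half
  · exact integrable_exp_half

lemma pi_out_val :
    ∫ x in {x : Fin 3 → ℝ | 0 < x 0}, (∏ i, Real.exp (-(x i)^2/2)) * x 0 = 2*π := by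
  have hms : MeasurableSet {x : Fin 3 → ℝ | 0 < x 0} :=
    measurableSet_lt measurable_const (measurable_pi_apply 0)
  rw [← integral_indicator hms]
  have h : Set.indicator {x : Fin 3 → ℝ | 0 < x 0}
        (fun x => (∏ i, Real.exp (-(x i)^2/2)) * x 0)
      = fun x => ∏ i, gvec' i (x i) := by
    funext x
    simp only [Fin.prod_univ_three, gvec'0, gvec'1, gvec'2]
    by_cases h : 0 < x 0
    · rw [Set.indicator_of_mem (show x ∈ {x : Fin 3 → ℝ | 0 < x 0} from h),
        Set.indicator_of_mem (show x 0 ∈ Ioi (0:ℝ) from h)]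
      ring
    · rw [Set.indicator_of_notMem (show x ∉ {x : Fin 3 → ℝ | 0 < x 0} from h),
        Set.indicator_of_notMem (show x 0 ∉ Ioi (0:ℝ) from h)]
      ring
  simp only [h]
  rw [MeasureTheory.integral_fintype_prod_volume_eq_prod (f := gvec'), Fin.prod_univ_three,
    gvec'0, gvec'1, gvec'2]
  rw [integral_indicator measurableSet_Ioi, int_Ioi_mul_exp_half, int_exp_half]
  rw [one_mul, Real.mul_self_sqrt (by positivity)]




local notation "E3" => EuclideanSpace ℝ (Fin 3)

lemma exists_onb (n : E3) (hn : ‖n‖ = 1) :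
    ∃ b : OrthonormalBasis (Fin 3) ℝ E3, b 0 = n := by
  have hcard : Module.finrank ℝ E3 = Fintype.card (Fin 3) := by
    simp [finrank_euclideanSpace_fin]
  have horth : Orthonormal ℝ (Set.restrict {(0 : Fin 3)} (fun _ : Fin 3 => n)) := by
    constructor
    · intro i; exact hn
    · intro i j hij
      exact absurd (Subsingleton.elim i j) hij
  obtain ⟨b, hb⟩ := horth.exists_orthonormalBasis_extension_of_card_eq hcard
  exact ⟨b, hb 0 rfl⟩

lemma gauss_facts (n : E3) (hn : ‖n‖ = 1) :
    Integrable (fun v : E3 => gaussMu v * (inner ℝ n v : ℝ)) ∧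
    ∫ v in outSet n, gaussMu v * (inner ℝ n v : ℝ) = (Real.sqrt (2*π))⁻¹ := by
  obtain ⟨b, hb0⟩ := exists_onb n hn
  let ψ : E3 ≃ᵐ (Fin 3 → ℝ) :=
    b.repr.toHomeomorph.toMeasurableEquiv.trans (MeasurableEquiv.toLp 2 (Fin 3 → ℝ)).symm
  have hψ : MeasurePreserving ψ volume volume :=
    (EuclideanSpace.volume_preserving_symm_measurableEquiv_toLp (Fin 3)).comp b.measurePreserving_repr
  set F : (Fin 3 → ℝ) → ℝ :=
    fun x => (2*π) ^ (-(3:ℝ)/2) * ((∏ i, Real.exp (-(x i)^2/2)) * x 0) with hF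
  have hcoord : ∀ (v : E3) (i : Fin 3), ψ v i = b.repr v i := fun v i => rfl
  have hinner : ∀ v : E3, (inner ℝ n v : ℝ) = ψ v 0 := by
    intro v
    rw [hcoord, ← hb0, b.repr_apply_apply]
  have hpt : ∀ v : E3, gaussMu v * (inner ℝ n v : ℝ) = F (ψ v) := by
    intro v
    have hnorm : ‖v‖^2 = ∑ i, (ψ v i)^2 := by
      rw [← b.repr.norm_map v, EuclideanSpace.norm_eq,
        Real.sq_sqrt (by positivity)]
      exact Finset.sum_congr rfl fun i _ => by rw [Real.norm_eq_abs, sq_abs]; rfl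
    have hexp : Real.exp (-‖v‖^2/2) = ∏ i, Real.exp (-(ψ v i)^2/2) := by
      rw [hnorm, ← Real.exp_sum]
      congr 1
      rw [← Finset.sum_neg_distrib, Finset.sum_div]
    rw [hF, gaussMu, hexp, hinner]
    ring
  have hpre : outSet n = ψ ⁻¹' {x : Fin 3 → ℝ | 0 < x 0} := by
    ext v
    simp only [outSet, Set.mem_setOf_eq, Set.mem_preimage, hinner v]
  have hFint : Integrable F := pi_integrable.const_mul _
  constructor
  · have : (fun v : E3 => gaussMu v * (inner ℝ n v : ℝ)) = fun v => F (ψ v) := funext hpt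
    rw [this]
    exact (hψ.integrable_comp_emb ψ.measurableEmbedding).2 hFint
  · calc ∫ v in outSet n, gaussMu v * (inner ℝ n v : ℝ)
        = ∫ v in ψ ⁻¹' {x : Fin 3 → ℝ | 0 < x 0}, F (ψ v) := by
          rw [← hpre]; simp only [hpt]
      _ = ∫ x in {x : Fin 3 → ℝ | 0 < x 0}, F x :=
          hψ.setIntegral_preimage_emb ψ.measurableEmbedding _ _
      _ = (Real.sqrt (2*π))⁻¹ := by
          have h2π : (0:ℝ) < 2*π := by positivity
          rw [hF, integral_const_mul, pi_out_val]
          calc (2*π) ^ (-(3:ℝ)/2) * (2*π)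
              = (2*π) ^ (-(3:ℝ)/2) * (2*π) ^ (1:ℝ) := by rw [Real.rpow_one]
            _ = (2*π) ^ (-(3:ℝ)/2 + 1) := (Real.rpow_add h2π _ _).symm
            _ = (2*π) ^ (-(1/2:ℝ)) := by norm_num
            _ = (Real.sqrt (2*π))⁻¹ := by
                rw [Real.rpow_neg h2π.le, ← Real.sqrt_eq_rpow]






lemma gaussMu_nonneg (v : E3) : 0 ≤ gaussMu v := by
  unfold gaussMu; positivity

lemma gaussMu_neg (v : E3) : gaussMu (-v) = gaussMu v := by
  unfold gaussMu; rw [norm_neg]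

lemma gauss_in_val (n : E3) (hn : ‖n‖ = 1) :
    ∫ v in {v : E3 | (inner ℝ n v : ℝ) < 0}, gaussMu v * (inner ℝ n v : ℝ)
      = -(Real.sqrt (2*π))⁻¹ := by
  have hneg : MeasurePreserving (fun v : E3 => -v) volume volume :=
    Measure.measurePreserving_neg _
  have hemb : MeasurableEmbedding (fun v : E3 => -v) :=
    (Homeomorph.neg E3).measurableEmbedding
  have hpre : (fun v : E3 => -v) ⁻¹' (outSet n) = {v : E3 | (inner ℝ n v : ℝ) < 0} := by
    ext v
    simp only [Set.mem_preimage, outSet, Set.mem_setOf_eq, inner_neg_right]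
    constructor <;> intro h <;> linarith
  have key := hneg.setIntegral_preimage_emb hemb
    (fun v => gaussMu v * (inner ℝ n v : ℝ)) (outSet n)
  rw [hpre] at key
  rw [(gauss_facts n hn).2] at key
  have : ∀ v : E3, gaussMu (-v) * (inner ℝ n (-v) : ℝ)
      = -(gaussMu v * (inner ℝ n v : ℝ)) := by
    intro v
    rw [gaussMu_neg, inner_neg_right]
    ring
  simp only [this] at key
  rw [integral_neg] at key
  linarith


/-- Coercivity identity for the diffuse reflection boundary: if `f = P_γ f` on incoming
velocities, then `∫ |f|²(n·v) dv = ∫_{n·v>0} |(I−P_γ)f|²(n·v) dv`. -/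
theorem stmt11 (n : EuclideanSpace ℝ (Fin 3)) (hn : ‖n‖ = 1)
    (f : EuclideanSpace ℝ (Fin 3) → ℝ)
    (hsq : IntegrableOn (fun v => (f v)^2 * (inner ℝ n v : ℝ)) (outSet n))
    (hbc : ∀ v, (inner ℝ n v : ℝ) < 0 → f v = Pgamma n f v) :
    ∫ v, (f v)^2 * (inner ℝ n v : ℝ) =
      ∫ v in outSet n, (f v - Pgamma n f v)^2 * (inner ℝ n v : ℝ) := by
  have h2π : (0:ℝ) < 2*π := by positivity
  set c : ℝ := Real.sqrt (2*π) with hc_def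
  have hc : 0 < c := Real.sqrt_pos.2 h2π
  set a : ℝ := ∫ u in outSet n, f u * Real.sqrt (gaussMu u) * (inner ℝ n u : ℝ) with ha_def
  have hPg : ∀ v, Pgamma n f v = c * Real.sqrt (gaussMu v) * a := fun v => rfl
  have hsqμ : ∀ v : E3, Real.sqrt (gaussMu v) * Real.sqrt (gaussMu v) = gaussMu v :=
    fun v => Real.mul_self_sqrt (gaussMu_nonneg v)
  have hI : Integrable (fun v : E3 => gaussMu v * (inner ℝ n v : ℝ)) := (gauss_facts n hn).1
  have hout_val : ∫ v in outSet n, gaussMu v * (inner ℝ n v : ℝ) = c⁻¹ := (gauss_facts n hn).2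
  have hin_val : ∫ v in {v : E3 | (inner ℝ n v : ℝ) < 0}, gaussMu v * (inner ℝ n v : ℝ) = -c⁻¹ :=
    gauss_in_val n hn
  have mout : MeasurableSet (outSet n) := by
    apply measurableSet_lt measurable_const
    exact (continuous_const.inner continuous_id).measurable
  have min' : MeasurableSet {v : E3 | (inner ℝ n v : ℝ) < 0} := by
    apply measurableSet_lt
    · exact (continuous_const.inner continuous_id).measurable
    · exact measurable_const
  -- cross term integrability
  have hg : IntegrableOn (fun v : E3 => a * (f v * Real.sqrt (gaussMu v) * (inner ℝ n v : ℝ)))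
      (outSet n) := by
    by_cases ha0 : a = 0
    · simp only [ha0, zero_mul]
      exact integrableOn_zero
    · have hint : IntegrableOn (fun u : E3 => f u * Real.sqrt (gaussMu u) * (inner ℝ n u : ℝ))
          (outSet n) := by
        by_contra h
        exact ha0 (integral_undef h)
      exact hint.const_mul a
  -- RHS
  have expand : ∀ v : E3, (f v - Pgamma n f v)^2 * (inner ℝ n v : ℝ)
      = (f v)^2 * (inner ℝ n v : ℝ)
        - (2*c) * (a * (f v * Real.sqrt (gaussMu v) * (inner ℝ n v : ℝ)))
        + (c^2 * a^2) * (gaussMu v * (inner ℝ n v : ℝ)) := by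
    intro v
    rw [hPg v]
    linear_combination (c^2 * a^2 * (inner ℝ n v : ℝ)) * hsqμ v
  have hRHS : ∫ v in outSet n, (f v - Pgamma n f v)^2 * (inner ℝ n v : ℝ)
      = (∫ v in outSet n, (f v)^2 * (inner ℝ n v : ℝ)) - 2*c*a^2 + c*a^2 := by
    simp only [expand]
    rw [integral_add, integral_sub hsq (hg.const_mul (2*c))]
    · rw [integral_const_mul, integral_const_mul, integral_const_mul, ← ha_def, hout_val]
      have h1 : c^2 * a^2 * c⁻¹ = c * a^2 := by
        field_simp [pow_two]
      rw [h1]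
      ring
    · exact hsq.sub (hg.const_mul (2*c))
    · exact (hI.integrableOn).const_mul _
  -- LHS
  have hq : (fun v : E3 => (f v)^2 * (inner ℝ n v : ℝ))
      = (fun v : E3 =>
          Set.indicator (outSet n) (fun v => (f v)^2 * (inner ℝ n v : ℝ)) v
          + Set.indicator {v : E3 | (inner ℝ n v : ℝ) < 0}
              (fun v => (c^2 * a^2) * (gaussMu v * (inner ℝ n v : ℝ))) v) := by
    funext v
    rcases lt_trichotomy ((inner ℝ n v : ℝ)) 0 with h | h | h
    · have hv1 : v ∉ outSet n := by simp only [outSet, Set.mem_setOf_eq]; linarith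
      have hv2 : v ∈ {v : E3 | (inner ℝ n v : ℝ) < 0} := h
      simp only [Set.indicator_of_notMem hv1, Set.indicator_of_mem hv2, zero_add]
      rw [hbc v h, hPg v]
      linear_combination (c^2 * a^2 * (inner ℝ n v : ℝ)) * hsqμ v
    · have hv1 : v ∉ outSet n := by simp only [outSet, Set.mem_setOf_eq]; linarith
      have hv2 : v ∉ {v : E3 | (inner ℝ n v : ℝ) < 0} := by
        simp only [Set.mem_setOf_eq]; linarith
      simp only [Set.indicator_of_notMem hv1, Set.indicator_of_notMem hv2, h]
      ring
    · have hv1 : v ∈ outSet n := h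
      have hv2 : v ∉ {v : E3 | (inner ℝ n v : ℝ) < 0} := by
        simp only [Set.mem_setOf_eq]; linarith
      simp only [Set.indicator_of_mem hv1, Set.indicator_of_notMem hv2, add_zero]
  have hLHS : ∫ v, (f v)^2 * (inner ℝ n v : ℝ)
      = (∫ v in outSet n, (f v)^2 * (inner ℝ n v : ℝ)) - c*a^2 := by
    conv_lhs => rw [hq]
    rw [integral_add ((integrable_indicator_iff mout).2 hsq)
      ((integrable_indicator_iff min').2 ((hI.const_mul _).integrableOn))]
    rw [integral_indicator mout, integral_indicator min']
    rw [integral_const_mul, hin_val]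
    have h1 : c^2 * a^2 * (-c⁻¹) = -(c * a^2) := by
      field_simp [pow_two]
    rw [h1]
    ring
  rw [hLHS, hRHS]
  ring
end

section
/- Let μ, w be as above with 0 ≤ θ < 1/4, let ‖wf₁‖_∞ ≤ δ, ‖wf₂‖_∞ ≤ δ with δ small enough that both densities ρₖ ≥ 1/2. Define Uₖ = ρₖ^{-1} ∫ v Fₖ(v) dv where Fₖ = μ + √μ fₖ. Then there exists C, independent of f₁, f₂, with |U₁ − U₂| ≤ C ‖w(f₁ − f₂)‖_∞. -/
open MeasureTheory Real

/-- The velocity weight `w(v) = (1+|v|)^β e^{θ|v|²}`. -/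
noncomputable def wgt (β θ : ℝ) (v : EuclideanSpace ℝ (Fin 3)) : ℝ :=
  (1 + ‖v‖) ^ β * Real.exp (θ * ‖v‖^2)

section aux

local notation "E" => EuclideanSpace ℝ (Fin 3)

lemma intExp {b : ℝ} (hb : 0 < b) :
    Integrable (fun v : E => Real.exp (-b * ‖v‖^2)) := by
  have h := (GaussianFourier.integrable_cexp_neg_mul_sq_norm_add (V := E)
    (b := (b:ℂ)) (by simpa using hb) 0 0).norm
  refine h.congr (Filter.Eventually.of_forall fun v => ?_)
  simp [Complex.norm_exp, ← Complex.ofReal_pow]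

lemma intNormExp {b : ℝ} (hb : 0 < b) :
    Integrable (fun v : E => ‖v‖ * Real.exp (-b * ‖v‖^2)) := by
  refine ((intExp (half_pos hb)).const_mul (1 + 2/b)).mono' ?_
    (Filter.Eventually.of_forall fun v => ?_)
  · exact ((continuous_norm.mul (by fun_prop)).aestronglyMeasurable)
  · have h1 : ‖v‖ ≤ (1 + 2/b) * Real.exp (b/2 * ‖v‖^2) := by
      have h2 : ‖v‖ ≤ 1 + ‖v‖^2 := by nlinarith [norm_nonneg v, sq_nonneg (‖v‖ - 1)]
      have h3 : 1 + ‖v‖^2 ≤ (1 + 2/b) * (1 + b/2 * ‖v‖^2) := by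
        have hb' : 0 < 2/b := by positivity
        have hkey : (2/b) * (b/2) = 1 := by field_simp
        nlinarith [sq_nonneg ‖v‖]
      have h4 : 1 + b/2 * ‖v‖^2 ≤ Real.exp (b/2 * ‖v‖^2) :=
        Real.add_one_le_exp _ |>.trans_eq' (by ring_nf)
      calc ‖v‖ ≤ 1 + ‖v‖^2 := h2
        _ ≤ (1 + 2/b) * (1 + b/2 * ‖v‖^2) := h3
        _ ≤ (1 + 2/b) * Real.exp (b/2 * ‖v‖^2) := by
            have : (0:ℝ) ≤ 1 + 2/b := by positivity
            nlinarith [h4]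
    have hpos : (0:ℝ) < Real.exp (-b * ‖v‖^2) := Real.exp_pos _
    rw [Real.norm_eq_abs, abs_of_nonneg (by positivity)]
    calc ‖v‖ * Real.exp (-b * ‖v‖^2)
        ≤ (1 + 2/b) * Real.exp (b/2 * ‖v‖^2) * Real.exp (-b * ‖v‖^2) := by
          nlinarith [hpos]
      _ = (1 + 2/b) * Real.exp (-(b/2) * ‖v‖^2) := by
          rw [mul_assoc, ← Real.exp_add]; ring_nf

lemma sqrt_gaussMu (v : E) :
    Real.sqrt (gaussMu v) = (2*π)^(-(3:ℝ)/4) * Real.exp (-(1/4) * ‖v‖^2) := by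
  have h : gaussMu v = ((2*π)^(-(3:ℝ)/4) * Real.exp (-(1/4) * ‖v‖^2))^2 := by
    rw [mul_pow, ← Real.rpow_natCast ((2*π) ^ (-(3:ℝ)/4)) 2, ← Real.rpow_mul (by positivity),
        ← Real.exp_nat_mul]
    unfold gaussMu
    norm_num
    ring_nf
    tauto
  rw [h, Real.sqrt_sq (by positivity)]

lemma wgt_ge_one {β θ : ℝ} (hβ : 0 ≤ β) (hθ0 : 0 ≤ θ) (v : E) : 1 ≤ wgt β θ v := by
  unfold wgt
  have h1 : (1:ℝ) ≤ (1 + ‖v‖) ^ β :=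
    Real.one_le_rpow (by linarith [norm_nonneg v]) hβ
  have h2 : (1:ℝ) ≤ Real.exp (θ * ‖v‖^2) :=
    Real.one_le_exp (by positivity)
  nlinarith

lemma gaussMu_cont : Continuous gaussMu := by
  unfold gaussMu; fun_prop

lemma gaussMu_pos (v : E) : 0 < gaussMu v := by
  unfold gaussMu; positivity

lemma abs_le_of_wgt {β θ : ℝ} (hβ : 0 ≤ β) (hθ0 : 0 ≤ θ) {f : E → ℝ} {d : ℝ}
    (hf : ∀ v, |wgt β θ v * f v| ≤ d) (v : E) : |f v| ≤ d := by
  have h1 := wgt_ge_one hβ hθ0 v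
  have h2 := hf v
  rw [abs_mul, abs_of_pos (by linarith : (0:ℝ) < wgt β θ v)] at h2
  nlinarith [abs_nonneg (f v)]

end aux

set_option maxHeartbeats 2000000 in
/-- Stability of the bulk velocity moment: `|U₁ − U₂| ≤ C ‖w(f₁ − f₂)‖_∞`,
assuming both densities are at least 1/2. -/
theorem stmt18 (β θ : ℝ) (hθ0 : 0 ≤ θ) (hθ : θ < 1/4) (hβ : 0 ≤ β) :
    ∃ C > 0, ∀ δ : ℝ, 0 ≤ δ → δ ≤ 1/2 →
      ∀ f₁ f₂ : EuclideanSpace ℝ (Fin 3) → ℝ, Measurable f₁ → Measurable f₂ →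
      (∀ v, |wgt β θ v * f₁ v| ≤ δ) → (∀ v, |wgt β θ v * f₂ v| ≤ δ) →
      ∀ ρ₁ ρ₂ : ℝ,
        ρ₁ = (∫ v, (gaussMu v + Real.sqrt (gaussMu v) * f₁ v)) →
        ρ₂ = (∫ v, (gaussMu v + Real.sqrt (gaussMu v) * f₂ v)) →
        1/2 ≤ ρ₁ → 1/2 ≤ ρ₂ →
      ∀ U₁ U₂ : EuclideanSpace ℝ (Fin 3),
        U₁ = ρ₁⁻¹ • (∫ v, (gaussMu v + Real.sqrt (gaussMu v) * f₁ v) • v) →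
        U₂ = ρ₂⁻¹ • (∫ v, (gaussMu v + Real.sqrt (gaussMu v) * f₂ v) • v) →
      ∀ M : ℝ, (∀ v, |wgt β θ v * (f₁ v - f₂ v)| ≤ M) →
      ‖U₁ - U₂‖ ≤ C * M := by
  classical
  set c : ℝ := (2*π)^(-(3:ℝ)/4) with hc
  set a : ℝ := (2*π)^(-(3:ℝ)/2) with ha
  have hcpos : 0 < c := by positivity
  have hapos : 0 < a := by positivity
  set I₀ : ℝ := ∫ v : EuclideanSpace ℝ (Fin 3), Real.exp (-(1/4) * ‖v‖^2) with hI₀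
  set I₁ : ℝ := ∫ v : EuclideanSpace ℝ (Fin 3), ‖v‖ * Real.exp (-(1/4) * ‖v‖^2) with hI₁
  have hI₀nn : 0 ≤ I₀ := integral_nonneg fun v => (Real.exp_pos _).le
  have hI₁nn : 0 ≤ I₁ := integral_nonneg fun v => by positivity
  have hintE : Integrable (fun v : EuclideanSpace ℝ (Fin 3) => Real.exp (-(1/4) * ‖v‖^2)) :=
    intExp (by norm_num)
  have hintNE : Integrable
      (fun v : EuclideanSpace ℝ (Fin 3) => ‖v‖ * Real.exp (-(1/4) * ‖v‖^2)) :=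
    intNormExp (by norm_num)
  set K : ℝ := (a + c/2) * I₁ with hK
  have hKnn : 0 ≤ K := by positivity
  refine ⟨2*c*I₁ + 4*(c*I₀)*K + 1, by positivity, ?_⟩
  intro δ hδ0 hδ1 f₁ f₂ hm₁ hm₂ hf₁ hf₂ ρ₁ ρ₂ hρ₁ hρ₂ hρ₁' hρ₂' U₁ U₂ hU₁ hU₂ M hM
  have hM0 : 0 ≤ M := (abs_nonneg _).trans (hM 0)
  have hb₁ : ∀ v, |f₁ v| ≤ δ := abs_le_of_wgt hβ hθ0 hf₁
  have hb₂ : ∀ v, |f₂ v| ≤ δ := abs_le_of_wgt hβ hθ0 hf₂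
  have hbg : ∀ v, |f₁ v - f₂ v| ≤ M := abs_le_of_wgt hβ hθ0 hM
  have hμbound : ∀ v : EuclideanSpace ℝ (Fin 3),
      gaussMu v ≤ a * Real.exp (-(1/4) * ‖v‖^2) := by
    intro v
    unfold gaussMu
    rw [← ha]
    have : Real.exp (-‖v‖^2/2) ≤ Real.exp (-(1/4) * ‖v‖^2) :=
      Real.exp_le_exp.2 (by nlinarith [sq_nonneg ‖v‖])
    nlinarith [Real.exp_pos (-‖v‖^2/2)]
  -- integrability of the pieces
  have hsm : ∀ (f : EuclideanSpace ℝ (Fin 3) → ℝ), Measurable f →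
      AEStronglyMeasurable
        (fun v : EuclideanSpace ℝ (Fin 3) =>
          (gaussMu v + Real.sqrt (gaussMu v) * f v) • v) volume := by
    intro f hf
    exact ((gaussMu_cont.measurable.add
      ((gaussMu_cont.sqrt.measurable).mul hf)).smul measurable_id).aestronglyMeasurable
  have hsm' : ∀ (f : EuclideanSpace ℝ (Fin 3) → ℝ), Measurable f →
      AEStronglyMeasurable
        (fun v : EuclideanSpace ℝ (Fin 3) =>
          (gaussMu v + Real.sqrt (gaussMu v) * f v)) volume := by
    intro f hf
    exact (gaussMu_cont.measurable.add
      ((gaussMu_cont.sqrt.measurable).mul hf)).aestronglyMeasurable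
  have hFbound : ∀ (f : EuclideanSpace ℝ (Fin 3) → ℝ), (∀ v, |f v| ≤ δ) →
      ∀ v : EuclideanSpace ℝ (Fin 3),
      |gaussMu v + Real.sqrt (gaussMu v) * f v| ≤ (a + c/2) * Real.exp (-(1/4) * ‖v‖^2) := by
    intro f hf v
    have h1 := hμbound v
    have h2 := hf v
    have h3 := sqrt_gaussMu v
    have h4 : 0 < Real.exp (-(1/4) * ‖v‖^2) := Real.exp_pos _
    have h5 : |Real.sqrt (gaussMu v) * f v| ≤ c/2 * Real.exp (-(1/4) * ‖v‖^2) := by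
      rw [← hc] at h3
      rw [abs_mul, abs_of_nonneg (Real.sqrt_nonneg _), h3]
      have : |f v| ≤ 1/2 := le_trans h2 hδ1
      nlinarith [mul_le_mul_of_nonneg_left this (mul_pos hcpos h4).le]
    have h6 : 0 < gaussMu v := gaussMu_pos v
    calc |gaussMu v + Real.sqrt (gaussMu v) * f v|
        ≤ |gaussMu v| + |Real.sqrt (gaussMu v) * f v| := abs_add_le _ _
      _ ≤ a * Real.exp (-(1/4) * ‖v‖^2) + c/2 * Real.exp (-(1/4) * ‖v‖^2) := by
          rw [abs_of_pos h6]; linarith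
      _ = (a + c/2) * Real.exp (-(1/4) * ‖v‖^2) := by ring
  have hFint : ∀ (f : EuclideanSpace ℝ (Fin 3) → ℝ), Measurable f → (∀ v, |f v| ≤ δ) →
      Integrable (fun v : EuclideanSpace ℝ (Fin 3) =>
        (gaussMu v + Real.sqrt (gaussMu v) * f v)) := by
    intro f hmf hf
    refine (hintE.const_mul (a + c/2)).mono' (hsm' f hmf)
      (Filter.Eventually.of_forall fun v => ?_)
    simpa [Real.norm_eq_abs] using hFbound f hf v
  have hFvint : ∀ (f : EuclideanSpace ℝ (Fin 3) → ℝ), Measurable f → (∀ v, |f v| ≤ δ) →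
      Integrable (fun v : EuclideanSpace ℝ (Fin 3) =>
        (gaussMu v + Real.sqrt (gaussMu v) * f v) • v) := by
    intro f hmf hf
    refine (hintNE.const_mul (a + c/2)).mono' (hsm f hmf)
      (Filter.Eventually.of_forall fun v => ?_)
    rw [norm_smul, Real.norm_eq_abs]
    calc |gaussMu v + Real.sqrt (gaussMu v) * f v| * ‖v‖
        ≤ ((a + c/2) * Real.exp (-(1/4) * ‖v‖^2)) * ‖v‖ :=
          mul_le_mul_of_nonneg_right (hFbound f hf v) (norm_nonneg v)
      _ = (a + c/2) * (‖v‖ * Real.exp (-(1/4) * ‖v‖^2)) := by ring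
  have hF₁ := hFint f₁ hm₁ hb₁
  have hF₂ := hFint f₂ hm₂ hb₂
  have hF₁v := hFvint f₁ hm₁ hb₁
  have hF₂v := hFvint f₂ hm₂ hb₂
  -- bound on ρ₁ - ρ₂
  have hρdiff : |ρ₁ - ρ₂| ≤ c * M * I₀ := by
    rw [hρ₁, hρ₂, ← integral_sub hF₁ hF₂]
    have : ∀ v : EuclideanSpace ℝ (Fin 3),
        (gaussMu v + Real.sqrt (gaussMu v) * f₁ v)
          - (gaussMu v + Real.sqrt (gaussMu v) * f₂ v)
        = Real.sqrt (gaussMu v) * (f₁ v - f₂ v) := fun v => by ring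
    simp_rw [this]
    rw [← Real.norm_eq_abs]
    have := norm_integral_le_of_norm_le (μ := volume)
      (f := fun v : EuclideanSpace ℝ (Fin 3) => Real.sqrt (gaussMu v) * (f₁ v - f₂ v))
      (g := fun v : EuclideanSpace ℝ (Fin 3) => c * M * Real.exp (-(1/4) * ‖v‖^2))
      ((hintE.const_mul (c*M)).congr (Filter.Eventually.of_forall fun v => by ring))
      (Filter.Eventually.of_forall fun v => ?_)
    · calc ‖∫ v : EuclideanSpace ℝ (Fin 3), Real.sqrt (gaussMu v) * (f₁ v - f₂ v)‖
          ≤ ∫ v : EuclideanSpace ℝ (Fin 3), c * M * Real.exp (-(1/4) * ‖v‖^2) := this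
        _ = c * M * I₀ := by rw [hI₀, ← integral_const_mul _ _]
    · rw [Real.norm_eq_abs, abs_mul, abs_of_nonneg (Real.sqrt_nonneg _), sqrt_gaussMu v, ← hc]
      have h1 := hbg v
      have h4 : 0 < Real.exp (-(1/4) * ‖v‖^2) := Real.exp_pos _
      nlinarith [mul_le_mul_of_nonneg_left h1 (mul_pos hcpos h4).le]
  -- bound on the difference of the vector integrals
  have hAdiff : ‖(∫ v, (gaussMu v + Real.sqrt (gaussMu v) * f₁ v) • v)
      - (∫ v, (gaussMu v + Real.sqrt (gaussMu v) * f₂ v) • v)‖ ≤ c * M * I₁ := by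
    rw [← integral_sub hF₁v hF₂v]
    have heq : ∀ v : EuclideanSpace ℝ (Fin 3),
        (gaussMu v + Real.sqrt (gaussMu v) * f₁ v) • v
          - (gaussMu v + Real.sqrt (gaussMu v) * f₂ v) • v
        = (Real.sqrt (gaussMu v) * (f₁ v - f₂ v)) • v := fun v => by
      rw [← sub_smul]; congr 1; ring
    simp_rw [heq]
    have := norm_integral_le_of_norm_le (μ := volume)
      (f := fun v : EuclideanSpace ℝ (Fin 3) =>
        (Real.sqrt (gaussMu v) * (f₁ v - f₂ v)) • v)
      (g := fun v : EuclideanSpace ℝ (Fin 3) =>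
        c * M * (‖v‖ * Real.exp (-(1/4) * ‖v‖^2)))
      ((hintNE.const_mul (c*M)).congr (Filter.Eventually.of_forall fun v => by ring))
      (Filter.Eventually.of_forall fun v => ?_)
    · calc ‖∫ v : EuclideanSpace ℝ (Fin 3), (Real.sqrt (gaussMu v) * (f₁ v - f₂ v)) • v‖
          ≤ ∫ v : EuclideanSpace ℝ (Fin 3), c * M * (‖v‖ * Real.exp (-(1/4) * ‖v‖^2)) := this
        _ = c * M * I₁ := by rw [hI₁, ← integral_const_mul _ _]
    · rw [norm_smul, Real.norm_eq_abs, abs_mul, abs_of_nonneg (Real.sqrt_nonneg _),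
        sqrt_gaussMu v, ← hc]
      have h1 := hbg v
      have h4 : 0 < Real.exp (-(1/4) * ‖v‖^2) := Real.exp_pos _
      have h6 : (0:ℝ) ≤ c * Real.exp (-(1/4) * ‖v‖^2) * ‖v‖ := by positivity
      nlinarith [mul_le_mul_of_nonneg_left h1 h6]
  -- bound on the second vector integral
  have hA₂ : ‖(∫ v, (gaussMu v + Real.sqrt (gaussMu v) * f₂ v) • v)‖ ≤ K := by
    have := norm_integral_le_of_norm_le (μ := volume)
      (f := fun v : EuclideanSpace ℝ (Fin 3) =>
        (gaussMu v + Real.sqrt (gaussMu v) * f₂ v) • v)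
      (g := fun v : EuclideanSpace ℝ (Fin 3) =>
        (a + c/2) * (‖v‖ * Real.exp (-(1/4) * ‖v‖^2)))
      ((hintNE.const_mul (a + c/2)).congr (Filter.Eventually.of_forall fun v => by ring))
      (Filter.Eventually.of_forall fun v => ?_)
    · calc ‖∫ v, (gaussMu v + Real.sqrt (gaussMu v) * f₂ v) • v‖
          ≤ ∫ v : EuclideanSpace ℝ (Fin 3),
              (a + c/2) * (‖v‖ * Real.exp (-(1/4) * ‖v‖^2)) := this
        _ = K := by rw [hK, hI₁, ← integral_const_mul _ _]
    · rw [norm_smul, Real.norm_eq_abs]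
      calc |gaussMu v + Real.sqrt (gaussMu v) * f₂ v| * ‖v‖
          ≤ ((a + c/2) * Real.exp (-(1/4) * ‖v‖^2)) * ‖v‖ :=
            mul_le_mul_of_nonneg_right (hFbound f₂ hb₂ v) (norm_nonneg v)
        _ = (a + c/2) * (‖v‖ * Real.exp (-(1/4) * ‖v‖^2)) := by ring
  -- assemble
  have h01 : (0:ℝ) < ρ₁ := lt_of_lt_of_le one_half_pos hρ₁'
  have h02 : (0:ℝ) < ρ₂ := lt_of_lt_of_le one_half_pos hρ₂'
  have hinv₁ : |ρ₁⁻¹| ≤ 2 := by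
    rw [abs_of_pos (inv_pos.2 h01), show (2:ℝ) = (1/2)⁻¹ by norm_num]
    exact inv_anti₀ one_half_pos hρ₁'
  have hinvdiff : |ρ₁⁻¹ - ρ₂⁻¹| ≤ 4 * |ρ₁ - ρ₂| := by
    rw [inv_sub_inv h01.ne' h02.ne', abs_div, abs_of_pos (mul_pos h01 h02),
      div_le_iff₀ (mul_pos h01 h02)]
    have h7 : |ρ₂ - ρ₁| = |ρ₁ - ρ₂| := abs_sub_comm _ _
    have h8 : (1:ℝ)/4 ≤ ρ₁ * ρ₂ := by nlinarith
    nlinarith [mul_le_mul_of_nonneg_left h8 (abs_nonneg (ρ₁ - ρ₂))]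
  have hkey : U₁ - U₂
      = ρ₁⁻¹ • ((∫ v, (gaussMu v + Real.sqrt (gaussMu v) * f₁ v) • v)
            - (∫ v, (gaussMu v + Real.sqrt (gaussMu v) * f₂ v) • v))
        + (ρ₁⁻¹ - ρ₂⁻¹) • (∫ v, (gaussMu v + Real.sqrt (gaussMu v) * f₂ v) • v) := by
    rw [hU₁, hU₂]; module
  rw [hkey]
  calc ‖ρ₁⁻¹ • ((∫ v, (gaussMu v + Real.sqrt (gaussMu v) * f₁ v) • v)
            - (∫ v, (gaussMu v + Real.sqrt (gaussMu v) * f₂ v) • v))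
        + (ρ₁⁻¹ - ρ₂⁻¹) • (∫ v, (gaussMu v + Real.sqrt (gaussMu v) * f₂ v) • v)‖
      ≤ ‖ρ₁⁻¹ • ((∫ v, (gaussMu v + Real.sqrt (gaussMu v) * f₁ v) • v)
            - (∫ v, (gaussMu v + Real.sqrt (gaussMu v) * f₂ v) • v))‖
        + ‖(ρ₁⁻¹ - ρ₂⁻¹) • (∫ v, (gaussMu v + Real.sqrt (gaussMu v) * f₂ v) • v)‖ :=
        norm_add_le _ _
    _ ≤ 2 * (c * M * I₁) + (4 * (c * M * I₀)) * K := by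
        gcongr ?_ + ?_
        · rw [norm_smul, Real.norm_eq_abs]
          have := mul_le_mul hinv₁ hAdiff (norm_nonneg _) (by norm_num)
          linarith
        · rw [norm_smul, Real.norm_eq_abs]
          have h8 : |ρ₁⁻¹ - ρ₂⁻¹| ≤ 4 * (c * M * I₀) := le_trans hinvdiff (by nlinarith)
          exact mul_le_mul h8 hA₂ (norm_nonneg _) (by positivity)
    _ ≤ (2*c*I₁ + 4*(c*I₀)*K + 1) * M := by nlinarith
end
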